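/- Let K be a field with char(K) ≠ 2, and let A be a unital integral domain K-algebra with a non-trivial involution ♮ (there exists a ∈ A with a^♮ ≠ a), extended to M_2(A) by (a_{ij})^♮ = (a_{ji}^♮). Then the Lie algebra K_{M_2(A)} of skew-symmetric elements is not solvable. -/
import Mathlib


open Matrix

/-- The skew-symmetric elements `{x | star x = -x}` as a `K`-submodule. -/
def skewSubmodule (K M : Type*) [Field K] [StarRing K] [TrivialStar K]
    [AddCommGroup M] [Module K M] [StarAddMonoid M] [StarModule K M] :
    Submodule K M where
  carrier := {x | star x = -x}
  add_mem' := by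
    intro a b ha hb
    simp only [Set.mem_setOf_eq] at *
    rw [star_add, ha, hb, neg_add]
  zero_mem' := by simp
  smul_mem' := by
    intro c x hx
    simp only [Set.mem_setOf_eq] at *
    rw [star_smul, hx, star_trivial, smul_neg]

/-- One step of the derived series: span of commutators. -/
def derivedStep (K A : Type*) [Field K] [Ring A] [Algebra K A] (L : Submodule K A) :
    Submodule K A :=
  Submodule.span K {z | ∃ x ∈ L, ∃ y ∈ L, z = x * y - y * x}

/-- Derived series of a subspace under the commutator bracket. -/
def lieDerSeries (K A : Type*) [Field K] [Ring A] [Algebra K A] (L : Submodule K A) :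
    ℕ → Submodule K A
  | 0 => L
  | n + 1 => derivedStep K A (lieDerSeries K A L n)

/-- Lower central series of a subspace under the commutator bracket. -/
def lowerCentral (K A : Type*) [Field K] [Ring A] [Algebra K A] (L : Submodule K A) :
    ℕ → Submodule K A
  | 0 => L
  | n + 1 => Submodule.span K
      {z | ∃ x ∈ lowerCentral K A L n, ∃ y ∈ L, z = x * y - y * x}

/-- Skew-symmetric matrices (w.r.t. plain transpose) as a submodule. -/
def skewT (K : Type*) [Field K] (n : ℕ) (A : Type*) [Ring A] [Algebra K A] :
    Submodule K (Matrix (Fin n) (Fin n) A) where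
  carrier := {X | Xᵀ = -X}
  add_mem' := by
    intro a b ha hb
    simp only [Set.mem_setOf_eq] at *
    rw [transpose_add, ha, hb, neg_add]
  zero_mem' := by simp
  smul_mem' := by
    intro c x hx
    simp only [Set.mem_setOf_eq] at *
    rw [transpose_smul, hx, smul_neg]

section AuxSkewM2

variable {K : Type*} [Field K] {A' : Type*} [Ring A'] [Algebra K A']

lemma mem_derivedStep_of_smul {L : Submodule K A'} {x y z : A'}
    (hx : x ∈ L) (hy : y ∈ L) {c : K} (hc : c ≠ 0)
    (h : c • z = x * y - y * x) : z ∈ derivedStep K A' L := by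
  have h1 : x * y - y * x ∈ derivedStep K A' L :=
    Submodule.subset_span ⟨x, hx, y, hy, rfl⟩
  rw [← h] at h1
  have h2 := (derivedStep K A' L).smul_mem c⁻¹ h1
  rwa [smul_smul, inv_mul_cancel₀ hc, one_smul] at h2

end AuxSkewM2

section MatsSkewM2
variable {A : Type*} [Ring A] (b : A)

/-- `H p = diag(b^p, -b^p)` -/
def matH (p : ℕ) : Matrix (Fin 2) (Fin 2) A := !![b^p, 0; 0, -b^p]
/-- `X p = [[0,b^p],[b^p,0]]` -/
def matX (p : ℕ) : Matrix (Fin 2) (Fin 2) A := !![0, b^p; b^p, 0]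
/-- `Y p = [[0,b^p],[-b^p,0]]` -/
def matY (p : ℕ) : Matrix (Fin 2) (Fin 2) A := !![0, b^p; -b^p, 0]

variable {K : Type*} [Field K] [Algebra K A]

lemma bracket_HY (p q : ℕ) :
    (2:K) • matX b (p+q) = matH b p * matY b q - matY b q * matH b p := by
  ext i j
  fin_cases i <;> fin_cases j <;>
    simp [matH, matX, matY, Matrix.mul_fin_two, pow_add, two_smul] <;>
    simp only [pow_mul_comm b q p] <;> abel

lemma bracket_YX (p q : ℕ) :
    (2:K) • matH b (p+q) = matY b q * matX b p - matX b p * matY b q := by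
  ext i j
  fin_cases i <;> fin_cases j <;>
    simp [matH, matX, matY, Matrix.mul_fin_two, pow_add, two_smul] <;>
    simp only [pow_mul_comm b q p] <;> abel

lemma bracket_HX (p q : ℕ) :
    (2:K) • matY b (p+q) = matH b p * matX b q - matX b q * matH b p := by
  ext i j
  fin_cases i <;> fin_cases j <;>
    simp [matH, matX, matY, Matrix.mul_fin_two, pow_add, two_smul] <;>
    simp only [pow_mul_comm b q p] <;> abel

end MatsSkewM2

section SkewMem
variable {A : Type*} [Ring A] [StarRing A] {b : A}

lemma matH_skew (hb : star b = -b) {p : ℕ} (hp : Odd p) :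
    star (matH b p) = -(matH b p) := by
  ext i j
  fin_cases i <;> fin_cases j <;>
    simp [matH, Matrix.star_apply, star_pow, hb, hp.neg_pow]

lemma matX_skew (hb : star b = -b) {p : ℕ} (hp : Odd p) :
    star (matX b p) = -(matX b p) := by
  ext i j
  fin_cases i <;> fin_cases j <;>
    simp [matX, Matrix.star_apply, star_pow, hb, hp.neg_pow]

lemma matY_skew (hb : star b = -b) {p : ℕ} (hp : Even p) :
    star (matY b p) = -(matY b p) := by
  ext i j
  fin_cases i <;> fin_cases j <;>
    simp [matY, Matrix.star_apply, star_pow, hb, hp.neg_pow]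

end SkewMem

/-- If `char K ≠ 2` and the involution on the integral domain `K`-algebra
`A` is non-trivial, then the skew-symmetric elements of `M₂(A)` form a non-solvable Lie
algebra. -/
theorem skew_M2_not_solvable_char_ne_two_nontrivial
    (K : Type*) [Field K] [StarRing K] [TrivialStar K] (hK : ringChar K ≠ 2)
    (A : Type*) [Ring A] [IsDomain A] [Algebra K A] [StarRing A] [StarModule K A]
    (ha : ∃ a : A, star a ≠ a) :
    ¬ ∃ m, lieDerSeries K (Matrix (Fin 2) (Fin 2) A)
        (skewSubmodule K (Matrix (Fin 2) (Fin 2) A)) m = ⊥ := by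
  rintro ⟨m, hm⟩
  obtain ⟨a, haa⟩ := ha
  set b : A := a - star a with hbdef
  have hbstar : star b = -b := by
    rw [hbdef, star_sub, star_star, neg_sub]
  have hbne : b ≠ 0 := sub_ne_zero_of_ne (Ne.symm haa)
  have h2 : (2:K) ≠ 0 := Ring.two_ne_zero hK
  set M := Matrix (Fin 2) (Fin 2) A with hM
  set L0 := skewSubmodule K M with hL0
  have key : ∀ n, ∃ N : ℕ, ∀ j, N ≤ j →
      matH b (2*j+1) ∈ lieDerSeries K M L0 n ∧
      matX b (2*j+1) ∈ lieDerSeries K M L0 n ∧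
      matY b (2*j+2) ∈ lieDerSeries K M L0 n := by
    intro n
    induction n with
    | zero =>
      refine ⟨0, fun j _ => ⟨?_, ?_, ?_⟩⟩
      · exact matH_skew hbstar ⟨j, by ring⟩
      · exact matX_skew hbstar ⟨j, by ring⟩
      · exact matY_skew hbstar ⟨j+1, by ring⟩
    | succ n ih =>
      obtain ⟨N, hN⟩ := ih
      refine ⟨2*N+1, fun j hj => ?_⟩
      obtain ⟨hH, hX, hY⟩ := hN N le_rfl
      obtain ⟨hH', hX', hY'⟩ := hN (j - N - 1) (by omega)
      obtain ⟨hH'', hX'', hY''⟩ := hN (j - N) (by omega)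
      show _ ∈ derivedStep K M (lieDerSeries K M L0 n) ∧
           _ ∈ derivedStep K M (lieDerSeries K M L0 n) ∧
           _ ∈ derivedStep K M (lieDerSeries K M L0 n)
      refine ⟨?_, ?_, ?_⟩
      · -- H(2j+1) from [Y(2(j-N-1)+2), X(2N+1)]
        have := mem_derivedStep_of_smul hY' hX h2
          (bracket_YX b (2*N+1) (2*(j-N-1)+2))
        have he : 2*N+1 + (2*(j-N-1)+2) = 2*j+1 := by omega
        rwa [he] at this
      · -- X(2j+1) from [H(2N+1), Y(2(j-N-1)+2)]
        have := mem_derivedStep_of_smul hH hY' h2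
          (bracket_HY b (2*N+1) (2*(j-N-1)+2))
        have he : 2*N+1 + (2*(j-N-1)+2) = 2*j+1 := by omega
        rwa [he] at this
      · -- Y(2j+2) from [H(2N+1), X(2(j-N)+1)]
        have := mem_derivedStep_of_smul hH hX'' h2
          (bracket_HX b (2*N+1) (2*(j-N)+1))
        have he : 2*N+1 + (2*(j-N)+1) = 2*j+2 := by omega
        rwa [he] at this
  obtain ⟨N, hN⟩ := key m
  have hmem := (hN N le_rfl).1
  rw [hm] at hmem
  have h0 : matH b (2*N+1) = 0 := Submodule.mem_bot K |>.mp hmem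
  have : b ^ (2*N+1) = 0 := by
    have := congr_fun (congr_fun h0 0) 0
    simpa [matH] using this
  exact pow_ne_zero _ hbne this
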